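/- Let N1, N2 be positive integers, L = {1,…,N1}×{1,…,N2}, L_var ⊆ L, α : Fin N1 → ℕ, β : Fin N2 → ℕ, γ : L_var → ℤ, and U : L → ℕ with U(l1,l2) > 0. If there exists a real-valued family n(l1,l2) with 0 ≤ n(l1,l2) ≤ U(l1,l2) for all (l1,l2) ∈ L satisfying ∑_{l2} n(l1,l2) = α(l1) for all l1, ∑_{l1} n(l1,l2) ≤ β(l2) for all l2, and n = γ on L_var, then there exists an integer-valued family n' satisfying the same constraints including the upper bounds U. -/

import Mathlib

set_option linter.unusedSectionVars false
set_option linter.unusedVariables false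
set_option linter.unnecessarySimpa false
set_option maxHeartbeats 1000000

open Finset


variable {R C : Type*} [Fintype R] [Fintype C] [DecidableEq R] [DecidableEq C]

/-- extension of a vector on `F` by zero -/
noncomputable def extF (F : Finset (R × C)) (z : ↥F → ℝ) (i : R) (j : C) : ℝ :=
  if h : (i, j) ∈ F then z ⟨(i, j), h⟩ else 0

lemma extF_add (F : Finset (R × C)) (z1 z2 : ↥F → ℝ) (i : R) (j : C) :
    extF F (z1 + z2) i j = extF F z1 i j + extF F z2 i j := by
  unfold extF; split <;> simp

lemma extF_smul (F : Finset (R × C)) (t : ℝ) (z : ↥F → ℝ) (i : R) (j : C) :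
    extF F (t • z) i j = t * extF F z i j := by
  unfold extF; split <;> simp

lemma extF_of_not_mem (F : Finset (R × C)) (z : ↥F → ℝ) {i : R} {j : C}
    (h : (i, j) ∉ F) : extF F z i j = 0 := dif_neg h

lemma extF_coe (F : Finset (R × C)) (z : ↥F → ℝ) (e : ↥F) :
    extF F z (e : R × C).1 (e : R × C).2 = z e := by
  have he : ((e : R × C).1, (e : R × C).2) ∈ F := by simpa using e.2
  unfold extF
  rw [dif_pos he]

theorem exists_kernel_vector (F : Finset (R × C)) (hF : F.Nonempty)
    (hrow : ∀ i ∈ F.image Prod.fst, 2 ≤ (F.filter (fun e => e.1 = i)).card)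
    (hcol : ∀ j ∈ F.image Prod.snd, 2 ≤ (F.filter (fun e => e.2 = j)).card) :
    ∃ w : R → C → ℝ,
      (∃ e ∈ F, w e.1 e.2 ≠ 0) ∧
      (∀ i j, (i, j) ∉ F → w i j = 0) ∧
      (∀ i, ∑ j, w i j = 0) ∧ (∀ j, ∑ i, w i j = 0) := by
  classical
  set Rt := F.image Prod.fst with hRt
  set Ct := F.image Prod.snd with hCt
  have hRtne : Rt.Nonempty := hF.image _
  obtain ⟨i0, hi0⟩ := hRtne
  -- cardinality inequalities
  have hcard1 : F.card = ∑ i ∈ Rt, (F.filter (fun e => e.1 = i)).card :=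
    card_eq_sum_card_fiberwise (fun e he => mem_image_of_mem _ he)
  have hcard2 : F.card = ∑ j ∈ Ct, (F.filter (fun e => e.2 = j)).card :=
    card_eq_sum_card_fiberwise (fun e he => mem_image_of_mem _ he)
  have hR2 : 2 * Rt.card ≤ F.card := by
    rw [hcard1, two_mul]
    calc Rt.card + Rt.card = ∑ _i ∈ Rt, 2 := by simp [two_mul, mul_comm]
    _ ≤ _ := Finset.sum_le_sum hrow
  have hC2 : 2 * Ct.card ≤ F.card := by
    rw [hcard2, two_mul]
    calc Ct.card + Ct.card = ∑ _j ∈ Ct, 2 := by simp [two_mul, mul_comm]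
    _ ≤ _ := Finset.sum_le_sum hcol
  have hsum : Rt.card + Ct.card ≤ F.card := by omega
  -- the constraint linear map
  let T : (↥F → ℝ) →ₗ[ℝ] ((↥(Rt.erase i0) → ℝ) × (↥Ct → ℝ)) :=
    { toFun := fun z =>
        (fun i => ∑ j, extF F z (i : R) j, fun j => ∑ i, extF F z i (j : C)),
      map_add' := by
        intro z1 z2
        refine Prod.ext ?_ ?_ <;> funext k <;>
          simp [extF_add, Finset.sum_add_distrib]
      map_smul' := by
        intro t z
        refine Prod.ext ?_ ?_ <;> funext k <;>
          simp [extF_smul, Finset.mul_sum] }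
  have hnotinj : ¬ Function.Injective T := by
    intro hinj
    have hle := LinearMap.finrank_le_finrank_of_injective hinj
    have h1 : Module.finrank ℝ (↥F → ℝ) = F.card := by
      rw [Module.finrank_fintype_fun_eq_card, Fintype.card_coe]
    have h2 : Module.finrank ℝ ((↥(Rt.erase i0) → ℝ) × (↥Ct → ℝ))
        = (Rt.erase i0).card + Ct.card := by
      rw [Module.finrank_prod, Module.finrank_fintype_fun_eq_card,
        Module.finrank_fintype_fun_eq_card, Fintype.card_coe, Fintype.card_coe]
    rw [h1, h2, Finset.card_erase_of_mem hi0] at hle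
    have hpos : 1 ≤ Rt.card := Finset.card_pos.2 ⟨i0, hi0⟩
    omega
  rw [Function.not_injective_iff] at hnotinj
  obtain ⟨z1, z2, heq, hne⟩ := hnotinj
  set z := z1 - z2 with hz
  have hzne : z ≠ 0 := sub_ne_zero.2 hne
  have hTz : T z = 0 := by rw [hz, map_sub, heq, sub_self]
  set w := extF F z with hw
  have hsupp : ∀ i j, (i, j) ∉ F → w i j = 0 := fun i j h => extF_of_not_mem F z h
  have hcolz : ∀ j, ∑ i, w i j = 0 := by
    intro j
    by_cases hj : j ∈ Ct
    · have := congrArg (fun p => p.2 ⟨j, hj⟩) hTz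
      exact this
    · refine Finset.sum_eq_zero fun i _ => hsupp i j fun hmem => hj ?_
      exact mem_image_of_mem _ hmem
  have hrowz' : ∀ i, i ≠ i0 → ∑ j, w i j = 0 := by
    intro i hi
    by_cases hiRt : i ∈ Rt
    · have hiE : i ∈ Rt.erase i0 := Finset.mem_erase.2 ⟨hi, hiRt⟩
      have := congrArg (fun p => p.1 ⟨i, hiE⟩) hTz
      exact this
    · refine Finset.sum_eq_zero fun j _ => hsupp i j fun hmem => hiRt ?_
      exact mem_image_of_mem _ hmem
  have hrowz : ∀ i, ∑ j, w i j = 0 := by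
    intro i
    by_cases hi : i = i0
    · subst hi
      have htot : ∑ i, ∑ j, w i j = 0 := by
        rw [Finset.sum_comm]
        exact Finset.sum_eq_zero fun j _ => hcolz j
      have hsplit : (∑ j, w i j) + ∑ i' ∈ Finset.univ.erase i, ∑ j, w i' j
          = ∑ i', ∑ j, w i' j := by
        simpa using Finset.add_sum_erase Finset.univ (fun i' => ∑ j, w i' j)
          (Finset.mem_univ i)
      have hrest : ∑ i' ∈ Finset.univ.erase i, ∑ j, w i' j = 0 :=
        Finset.sum_eq_zero fun i' hi' => hrowz' i' (Finset.ne_of_mem_erase hi')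
      rw [hrest, add_zero] at hsplit
      rw [hsplit, htot]
    · exact hrowz' i hi
  refine ⟨w, ?_, hsupp, hrowz, hcolz⟩
  obtain ⟨e, he⟩ := Function.ne_iff.1 hzne
  exact ⟨e, e.2, by rw [hw, extF_coe]; simpa using he⟩



theorem core_int {R C : Type*} [Fintype R] [Fintype C]
    (a b : R → C → ℤ) (r : R → ℤ) (c : C → ℤ) (x : R → C → ℝ)
    (hint : ∀ i j, ∃ m : ℤ, (m : ℝ) = x i j)
    (hab : ∀ i j, (a i j : ℝ) ≤ x i j ∧ x i j ≤ (b i j : ℝ))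
    (hr : ∀ i, ∑ j, x i j = (r i : ℝ))
    (hc : ∀ j, ∑ i, x i j = (c j : ℝ)) :
    ∃ y : R → C → ℤ, (∀ i j, a i j ≤ y i j ∧ y i j ≤ b i j) ∧
      (∀ i, ∑ j, y i j = r i) ∧ (∀ j, ∑ i, y i j = c j) := by
  choose y hy using hint
  refine ⟨y, fun i j => ⟨?_, ?_⟩, fun i => ?_, fun j => ?_⟩
  · have := (hab i j).1; rw [← hy i j] at this; exact_mod_cast this
  · have := (hab i j).2; rw [← hy i j] at this; exact_mod_cast this
  · have h1 : ((∑ j, y i j : ℤ) : ℝ) = ((r i : ℤ) : ℝ) := by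
      push_cast
      rw [← hr i]
      exact Finset.sum_congr rfl fun j _ => hy i j
    exact_mod_cast h1
  · have h1 : ((∑ i, y i j : ℤ) : ℝ) = ((c j : ℤ) : ℝ) := by
      push_cast
      rw [← hc j]
      exact Finset.sum_congr rfl fun i _ => hy i j
    exact_mod_cast h1

open scoped Classical in
theorem fiber_two_row {R C : Type*} [Fintype R] [Fintype C] [DecidableEq R]
    (x : R → C → ℝ) (r : R → ℤ) (hr : ∀ i, ∑ j, x i j = (r i : ℝ)) (i : R)
    (hi : ∃ j, ¬∃ m : ℤ, (m : ℝ) = x i j) :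
    2 ≤ ((Finset.univ.filter (fun e : R × C => ¬∃ m : ℤ, (m : ℝ) = x e.1 e.2)).filter
      (fun e => e.1 = i)).card := by
  obtain ⟨j0, hj0⟩ := hi
  set G := ((Finset.univ.filter (fun e : R × C => ¬∃ m : ℤ, (m : ℝ) = x e.1 e.2)).filter
      (fun e => e.1 = i)) with hG
  have hj0G : (i, j0) ∈ G := by
    simp only [hG, Finset.mem_filter, Finset.mem_univ, true_and]
    exact ⟨hj0, trivial⟩
  by_contra hlt
  push_neg at hlt
  have hcard : G.card = 1 := by
    have : 1 ≤ G.card := Finset.card_pos.2 ⟨_, hj0G⟩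
    omega
  obtain ⟨e, he⟩ := Finset.card_eq_one.1 hcard
  have hej : (i, j0) = e := by rw [he] at hj0G; simpa using hj0G
  set g : C → ℤ := fun j => if h : ∃ m : ℤ, (m : ℝ) = x i j then h.choose else 0 with hgdef
  have hg : ∀ j, j ≠ j0 → (g j : ℝ) = x i j := by
    intro j hj
    have hex : ∃ m : ℤ, (m : ℝ) = x i j := by
      by_contra hnot
      have : (i, j) ∈ G := by
        simp only [hG, Finset.mem_filter, Finset.mem_univ, true_and]
        exact ⟨hnot, trivial⟩
      rw [he, ← hej] at this
      simp at this
      exact hj this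
    simp only [hgdef, dif_pos hex]
    exact hex.choose_spec
  have hsplit : x i j0 + ∑ j ∈ Finset.univ.erase j0, x i j = (r i : ℝ) := by
    rw [← hr i]
    exact Finset.add_sum_erase _ _ (Finset.mem_univ j0)
  have hsum : ∑ j ∈ Finset.univ.erase j0, x i j
      = ((∑ j ∈ Finset.univ.erase j0, g j : ℤ) : ℝ) := by
    push_cast
    exact Finset.sum_congr rfl fun j hj => (hg j (Finset.ne_of_mem_erase hj)).symm
  exact hj0 ⟨r i - ∑ j ∈ Finset.univ.erase j0, g j, by push_cast [← hsplit, hsum]; ring⟩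

open scoped Classical in
theorem fiber_two_col {R C : Type*} [Fintype R] [Fintype C] [DecidableEq C]
    (x : R → C → ℝ) (c : C → ℤ) (hc : ∀ j, ∑ i, x i j = (c j : ℝ)) (j : C)
    (hj : ∃ i, ¬∃ m : ℤ, (m : ℝ) = x i j) :
    2 ≤ ((Finset.univ.filter (fun e : R × C => ¬∃ m : ℤ, (m : ℝ) = x e.1 e.2)).filter
      (fun e => e.2 = j)).card := by
  obtain ⟨i0, hi0⟩ := hj
  set G := ((Finset.univ.filter (fun e : R × C => ¬∃ m : ℤ, (m : ℝ) = x e.1 e.2)).filter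
      (fun e => e.2 = j)) with hG
  have hi0G : (i0, j) ∈ G := by
    simp only [hG, Finset.mem_filter, Finset.mem_univ, true_and]
    exact ⟨hi0, trivial⟩
  by_contra hlt
  push_neg at hlt
  have hcard : G.card = 1 := by
    have : 1 ≤ G.card := Finset.card_pos.2 ⟨_, hi0G⟩
    omega
  obtain ⟨e, he⟩ := Finset.card_eq_one.1 hcard
  have hej : (i0, j) = e := by rw [he] at hi0G; simpa using hi0G
  set g : R → ℤ := fun i => if h : ∃ m : ℤ, (m : ℝ) = x i j then h.choose else 0 with hgdef
  have hg : ∀ i, i ≠ i0 → (g i : ℝ) = x i j := by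
    intro i hi
    have hex : ∃ m : ℤ, (m : ℝ) = x i j := by
      by_contra hnot
      have : (i, j) ∈ G := by
        simp only [hG, Finset.mem_filter, Finset.mem_univ, true_and]
        exact ⟨hnot, trivial⟩
      rw [he, ← hej] at this
      simp at this
      exact hi this
    simp only [hgdef, dif_pos hex]
    exact hex.choose_spec
  have hsplit : x i0 j + ∑ i ∈ Finset.univ.erase i0, x i j = (c j : ℝ) := by
    rw [← hc j]
    simpa using Finset.add_sum_erase Finset.univ (fun i => x i j) (Finset.mem_univ i0)
  have hsum : ∑ i ∈ Finset.univ.erase i0, x i j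
      = ((∑ i ∈ Finset.univ.erase i0, g i : ℤ) : ℝ) := by
    push_cast
    exact Finset.sum_congr rfl fun i hi => (hg i (Finset.ne_of_mem_erase hi)).symm
  exact hi0 ⟨c j - ∑ i ∈ Finset.univ.erase i0, g i, by push_cast [← hsplit, hsum]; ring⟩




open scoped Classical in
theorem core_trans {R C : Type*} [Fintype R] [Fintype C] [DecidableEq R] [DecidableEq C]
    (n : ℕ) (a b : R → C → ℤ) (r : R → ℤ) (c : C → ℤ) (x : R → C → ℝ)
    (hn : (Finset.univ.filter (fun e : R × C => ¬∃ m : ℤ, (m : ℝ) = x e.1 e.2)).card ≤ n)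
    (hab : ∀ i j, (a i j : ℝ) ≤ x i j ∧ x i j ≤ (b i j : ℝ))
    (hr : ∀ i, ∑ j, x i j = (r i : ℝ))
    (hc : ∀ j, ∑ i, x i j = (c j : ℝ)) :
    ∃ y : R → C → ℤ,
      (∀ i j, a i j ≤ y i j ∧ y i j ≤ b i j) ∧
      (∀ i, ∑ j, y i j = r i) ∧ (∀ j, ∑ i, y i j = c j) := by
  induction n generalizing x with
  | zero =>
    refine core_int a b r c x (fun i j => ?_) hab hr hc
    by_contra hfrac
    have hmem : (i, j) ∈ (Finset.univ.filter
        (fun e : R × C => ¬∃ m : ℤ, (m : ℝ) = x e.1 e.2)) :=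
      Finset.mem_filter.2 ⟨Finset.mem_univ _, hfrac⟩
    have := Finset.card_pos.2 ⟨_, hmem⟩
    omega
  | succ n ih =>
    set F := Finset.univ.filter (fun e : R × C => ¬∃ m : ℤ, (m : ℝ) = x e.1 e.2) with hF
    by_cases hFne : F.Nonempty
    case neg =>
      refine core_int a b r c x (fun i j => ?_) hab hr hc
      by_contra hfrac
      exact hFne ⟨(i, j), Finset.mem_filter.2 ⟨Finset.mem_univ _, hfrac⟩⟩
    case pos =>
    have hfrac_of_F : ∀ e ∈ F, ¬∃ m : ℤ, (m : ℝ) = x e.1 e.2 :=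
      fun e he => (Finset.mem_filter.1 he).2
    have hrow : ∀ i ∈ F.image Prod.fst, 2 ≤ (F.filter (fun e => e.1 = i)).card := by
      intro i hi
      obtain ⟨e, heF, hei⟩ := Finset.mem_image.1 hi
      have hfrac : ¬∃ m : ℤ, (m : ℝ) = x i e.2 := by
        have := hfrac_of_F e heF
        rwa [hei] at this
      exact fiber_two_row x r hr i ⟨e.2, hfrac⟩
    have hcol : ∀ j ∈ F.image Prod.snd, 2 ≤ (F.filter (fun e => e.2 = j)).card := by
      intro j hj
      obtain ⟨e, heF, hej⟩ := Finset.mem_image.1 hj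
      have hfrac : ¬∃ m : ℤ, (m : ℝ) = x e.1 j := by
        have := hfrac_of_F e heF
        rwa [hej] at this
      exact fiber_two_col x c hc j ⟨e.1, hfrac⟩
    obtain ⟨w, ⟨e0, he0F, he0w⟩, hsupp, hrowz, hcolz⟩ :=
      exists_kernel_vector F hFne hrow hcol
    set S := F.filter (fun e => w e.1 e.2 ≠ 0) with hS
    have hSne : S.Nonempty := ⟨e0, Finset.mem_filter.2 ⟨he0F, he0w⟩⟩
    set te : R × C → ℝ := fun e =>
      (if 0 < w e.1 e.2 then ((⌈x e.1 e.2⌉ : ℝ) - x e.1 e.2) / w e.1 e.2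
       else ((⌊x e.1 e.2⌋ : ℝ) - x e.1 e.2) / w e.1 e.2) with hte
    have hteval : ∀ e : R × C, te e =
        (if 0 < w e.1 e.2 then ((⌈x e.1 e.2⌉ : ℝ) - x e.1 e.2) / w e.1 e.2
         else ((⌊x e.1 e.2⌋ : ℝ) - x e.1 e.2) / w e.1 e.2) := fun e => rfl
    have hflt : ∀ e ∈ F, (⌊x e.1 e.2⌋ : ℝ) < x e.1 e.2 := by
      intro e he
      exact lt_of_le_of_ne (Int.floor_le _) fun hcon => hfrac_of_F e he ⟨⌊x e.1 e.2⌋, hcon⟩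
    have hclt : ∀ e ∈ F, x e.1 e.2 < (⌈x e.1 e.2⌉ : ℝ) := by
      intro e he
      exact lt_of_le_of_ne (Int.le_ceil _) fun hcon => hfrac_of_F e he ⟨⌈x e.1 e.2⌉, hcon.symm⟩
    have htepos : ∀ e ∈ S, 0 < te e := by
      intro e heS
      obtain ⟨heF, hwne⟩ := Finset.mem_filter.1 heS
      rcases lt_or_gt_of_ne hwne with hneg | hpos
      · rw [hteval, if_neg (not_lt.2 hneg.le)]
        exact div_pos_of_neg_of_neg (by linarith [hflt e heF]) hneg
      · rw [hteval, if_pos hpos]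
        exact div_pos (by linarith [hclt e heF]) hpos
    set t0 := S.inf' hSne te with ht0
    have ht0pos : 0 < t0 := (Finset.lt_inf'_iff hSne).2 htepos
    have ht0le : ∀ e ∈ S, t0 ≤ te e := fun e he => Finset.inf'_le te he
    set x' : R → C → ℝ := fun i j => x i j + t0 * w i j with hx'
    have hx'val : ∀ i j, x' i j = x i j + t0 * w i j := fun i j => rfl
    -- entrywise bounds on F
    have hbnd : ∀ e ∈ F, (⌊x e.1 e.2⌋ : ℝ) ≤ x' e.1 e.2 ∧ x' e.1 e.2 ≤ (⌈x e.1 e.2⌉ : ℝ) := by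
      intro e heF
      rcases eq_or_ne (w e.1 e.2) 0 with hw0 | hwne
      · rw [hx'val, hw0, mul_zero, add_zero]
        exact ⟨(hflt e heF).le, (hclt e heF).le⟩
      · have heS : e ∈ S := Finset.mem_filter.2 ⟨heF, hwne⟩
        have hle := ht0le e heS
        rcases lt_or_gt_of_ne hwne with hneg | hpos
        · have h1 : te e = ((⌊x e.1 e.2⌋ : ℝ) - x e.1 e.2) / w e.1 e.2 := by
            rw [hteval, if_neg (not_lt.2 hneg.le)]
          constructor
          · have h2 : te e * w e.1 e.2 ≤ t0 * w e.1 e.2 :=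
              mul_le_mul_of_nonpos_right hle hneg.le
            rw [h1, div_mul_cancel₀ _ hneg.ne] at h2
            rw [hx'val]; linarith
          · have h2 : t0 * w e.1 e.2 ≤ 0 :=
              mul_nonpos_of_nonneg_of_nonpos ht0pos.le hneg.le
            rw [hx'val]; linarith [hclt e heF]
        · have h1 : te e = ((⌈x e.1 e.2⌉ : ℝ) - x e.1 e.2) / w e.1 e.2 := by
            rw [hteval, if_pos hpos]
          constructor
          · have h2 : 0 ≤ t0 * w e.1 e.2 := mul_nonneg ht0pos.le hpos.le
            rw [hx'val]; linarith [hflt e heF]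
          · have h2 : t0 * w e.1 e.2 ≤ te e * w e.1 e.2 :=
              mul_le_mul_of_nonneg_right hle hpos.le
            rw [h1, div_mul_cancel₀ _ hpos.ne'] at h2
            rw [hx'val]; linarith
    have hab' : ∀ i j, (a i j : ℝ) ≤ x' i j ∧ x' i j ≤ (b i j : ℝ) := by
      intro i j
      by_cases hmem : (i, j) ∈ F
      · obtain ⟨h1, h2⟩ := hbnd (i, j) hmem
        constructor
        · refine le_trans ?_ h1
          exact_mod_cast Int.le_floor.2 (hab i j).1
        · refine le_trans h2 ?_
          exact_mod_cast Int.ceil_le.2 (hab i j).2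
      · rw [hx'val, hsupp i j hmem, mul_zero, add_zero]
        exact hab i j
    have hr' : ∀ i, ∑ j, x' i j = (r i : ℝ) := by
      intro i
      calc ∑ j, x' i j = ∑ j, (x i j + t0 * w i j) := rfl
      _ = (∑ j, x i j) + t0 * ∑ j, w i j := by
          rw [Finset.sum_add_distrib, Finset.mul_sum]
      _ = (r i : ℝ) := by rw [hrowz i, mul_zero, add_zero, hr i]
    have hc' : ∀ j, ∑ i, x' i j = (c j : ℝ) := by
      intro j
      calc ∑ i, x' i j = ∑ i, (x i j + t0 * w i j) := rfl
      _ = (∑ i, x i j) + t0 * ∑ i, w i j := by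
          rw [Finset.sum_add_distrib, Finset.mul_sum]
      _ = (c j : ℝ) := by rw [hcolz j, mul_zero, add_zero, hc j]
    obtain ⟨estar, hestarS, hestar⟩ := Finset.exists_mem_eq_inf' hSne te
    have hint_star : ∃ m : ℤ, (m : ℝ) = x' estar.1 estar.2 := by
      obtain ⟨heF, hwne⟩ := Finset.mem_filter.1 hestarS
      have ht0e : t0 = te estar := hestar
      rcases lt_or_gt_of_ne hwne with hneg | hpos
      · refine ⟨⌊x estar.1 estar.2⌋, ?_⟩
        rw [hx'val, ht0e, hteval, if_neg (not_lt.2 hneg.le),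
          div_mul_cancel₀ _ hneg.ne]
        ring
      · refine ⟨⌈x estar.1 estar.2⌉, ?_⟩
        rw [hx'val, ht0e, hteval, if_pos hpos, div_mul_cancel₀ _ hpos.ne']
        ring
    have hsubset : (Finset.univ.filter
        (fun e : R × C => ¬∃ m : ℤ, (m : ℝ) = x' e.1 e.2)) ⊆ F.erase estar := by
      intro e he
      have hefrac := (Finset.mem_filter.1 he).2
      have heF : e ∈ F := by
        by_contra hnot
        have hex : ∃ m : ℤ, (m : ℝ) = x e.1 e.2 := by
          by_contra h2
          exact hnot (Finset.mem_filter.2 ⟨Finset.mem_univ _, h2⟩)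
        have hw0 : w e.1 e.2 = 0 := hsupp e.1 e.2 (by simpa using hnot)
        refine hefrac ?_
        rwa [hx'val, hw0, mul_zero, add_zero]
      refine Finset.mem_erase.2 ⟨?_, heF⟩
      rintro rfl
      exact hefrac hint_star
    have hcard' : (Finset.univ.filter
        (fun e : R × C => ¬∃ m : ℤ, (m : ℝ) = x' e.1 e.2)).card ≤ n := by
      have h1 := Finset.card_le_card hsubset
      have h2 : (F.erase estar).card = F.card - 1 :=
        Finset.card_erase_of_mem (Finset.mem_filter.1 hestarS).1
      omega
    exact ih x' hcard' hab' hr' hc'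


/-- **Remark 1.** The integrality lemma continues to hold when each variable also has a
positive integer upper bound `U l1 l2`. -/
theorem integrality_lemma_with_upper_bounds (N1 N2 : ℕ) (hN1 : 0 < N1) (hN2 : 0 < N2)
    (Lvar : Set (Fin N1 × Fin N2)) (α : Fin N1 → ℕ) (β : Fin N2 → ℕ)
    (γ : Fin N1 × Fin N2 → ℤ) (U : Fin N1 → Fin N2 → ℕ) (hU : ∀ l1 l2, 0 < U l1 l2)
    (h : ∃ n : Fin N1 → Fin N2 → ℝ,
      (∀ l1 l2, 0 ≤ n l1 l2 ∧ n l1 l2 ≤ (U l1 l2 : ℝ)) ∧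
      (∀ l1, ∑ l2, n l1 l2 = (α l1 : ℝ)) ∧
      (∀ l2, ∑ l1, n l1 l2 ≤ (β l2 : ℝ)) ∧
      (∀ l1 l2, (l1, l2) ∈ Lvar → n l1 l2 = (γ (l1, l2) : ℝ))) :
    ∃ n' : Fin N1 → Fin N2 → ℤ,
      (∀ l1 l2, 0 ≤ n' l1 l2 ∧ n' l1 l2 ≤ (U l1 l2 : ℤ)) ∧
      (∀ l1, ∑ l2, n' l1 l2 = (α l1 : ℤ)) ∧
      (∀ l2, ∑ l1, n' l1 l2 ≤ (β l2 : ℤ)) ∧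
      (∀ l1 l2, (l1, l2) ∈ Lvar → n' l1 l2 = γ (l1, l2)) := by
  classical
  obtain ⟨x0, hbound, hrowsum, hcolsum, hvar⟩ := h
  set a : Fin N1 ⊕ Unit → Fin N2 → ℤ := fun i j =>
    match i with
    | Sum.inl l1 => if (l1, j) ∈ Lvar then γ (l1, j) else 0
    | Sum.inr _ => 0 with ha
  set b : Fin N1 ⊕ Unit → Fin N2 → ℤ := fun i j =>
    match i with
    | Sum.inl l1 => if (l1, j) ∈ Lvar then γ (l1, j) else (U l1 j : ℤ)
    | Sum.inr _ => (β j : ℤ) with hb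
  set r : Fin N1 ⊕ Unit → ℤ := fun i =>
    match i with
    | Sum.inl l1 => (α l1 : ℤ)
    | Sum.inr _ => (∑ j, (β j : ℤ)) - ∑ l1, (α l1 : ℤ) with hrdef
  set c : Fin N2 → ℤ := fun j => (β j : ℤ) with hcdef
  set x : Fin N1 ⊕ Unit → Fin N2 → ℝ := fun i j =>
    match i with
    | Sum.inl l1 => x0 l1 j
    | Sum.inr _ => (β j : ℝ) - ∑ l1, x0 l1 j with hx
  have hab : ∀ i j, (a i j : ℝ) ≤ x i j ∧ x i j ≤ (b i j : ℝ) := by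
    rintro (l1 | u) j
    · by_cases hv : (l1, j) ∈ Lvar
      · simp only [ha, hb, hx, if_pos hv]
        rw [hvar l1 j hv]
        exact ⟨le_refl _, le_refl _⟩
      · simp only [ha, hb, hx, if_neg hv]
        exact ⟨by exact_mod_cast (hbound l1 j).1, by exact_mod_cast (hbound l1 j).2⟩
    · simp only [ha, hb, hx]
      constructor
      · push_cast
        have := hcolsum j
        linarith
      · have h0 : (0 : ℝ) ≤ ∑ l1, x0 l1 j :=
          Finset.sum_nonneg fun l1 _ => (hbound l1 j).1
        push_cast
        linarith
  have hr : ∀ i, ∑ j, x i j = (r i : ℝ) := by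
    rintro (l1 | u)
    · simpa [hx, hrdef] using hrowsum l1
    · simp only [hx, hrdef]
      push_cast
      rw [Finset.sum_sub_distrib]
      rw [Finset.sum_comm]
      congr 1
      rw [Finset.sum_congr rfl fun l1 _ => hrowsum l1]
  have hc : ∀ j, ∑ i, x i j = (c j : ℝ) := by
    intro j
    rw [Fintype.sum_sum_type]
    simp only [hx, hcdef]
    simp
  obtain ⟨y, hyab, hyr, hyc⟩ := core_trans _ a b r c x le_rfl hab hr hc
  have hγb : ∀ l1 j, (l1, j) ∈ Lvar → 0 ≤ γ (l1, j) ∧ γ (l1, j) ≤ (U l1 j : ℤ) := by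
    intro l1 j hv
    have h1 := (hbound l1 j).1
    have h2 := (hbound l1 j).2
    rw [hvar l1 j hv] at h1 h2
    exact ⟨by exact_mod_cast h1, by exact_mod_cast h2⟩
  have hyvar : ∀ l1 j, (l1, j) ∈ Lvar → y (Sum.inl l1) j = γ (l1, j) := by
    intro l1 j hv
    have h1 := (hyab (Sum.inl l1) j).1
    have h2 := (hyab (Sum.inl l1) j).2
    simp only [ha, hb, if_pos hv] at h1 h2
    omega
  refine ⟨fun l1 j => y (Sum.inl l1) j, fun l1 j => ?_, fun l1 => ?_, fun j => ?_,
    fun l1 j hv => hyvar l1 j hv⟩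
  · show 0 ≤ y (Sum.inl l1) j ∧ y (Sum.inl l1) j ≤ (U l1 j : ℤ)
    by_cases hv : (l1, j) ∈ Lvar
    · rw [hyvar l1 j hv]
      exact hγb l1 j hv
    · have h1 := (hyab (Sum.inl l1) j).1
      have h2 := (hyab (Sum.inl l1) j).2
      simp only [ha, hb, if_neg hv] at h1 h2
      exact ⟨h1, h2⟩
  · simpa [hrdef] using hyr (Sum.inl l1)
  · have hsum := hyc j
    rw [Fintype.sum_sum_type] at hsum
    have hunit : ∑ u : Unit, y (Sum.inr u) j = y (Sum.inr ()) j := by simp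
    rw [hunit] at hsum
    have hslack : 0 ≤ y (Sum.inr ()) j := by
      have := (hyab (Sum.inr ()) j).1
      simpa [ha] using this
    simp only [hcdef] at hsum
    show ∑ l1, y (Sum.inl l1) j ≤ (β j : ℤ)
    omega
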